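/- Let A be a free group of finite rank (say A = FreeGroup (Fin r)), let G := A * FreeGroup Unit be the free product of A with the free group on one generator, and let g be an element of G that does not belong to the subgroup A of G (the image of the canonical inclusion of the factor A). Then the homomorphism φ : A * FreeGroup Unit → G which is the canonical inclusion on the factor A and sends the generator of FreeGroup Unit to g is injective. (Claim II: the subgroup of G generated by A together with g is the free product A * ⟨g⟩.) -/

import Mathlib

set_option linter.unusedSectionVars false

open Monoid Monoid.Coprod Monoid.CoprodI Monoid.CoprodI.Word

namespace FFX

variable {ι : Type*} [DecidableEq ι] {G : ι → Type*} [∀ i, Group (G i)] [∀ i, DecidableEq (G i)]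

theorem equiv_eq_smul_empty (x : CoprodI G) : Word.equiv x = x • Word.empty := rfl

theorem equiv_one : Word.equiv (1 : CoprodI G) = Word.empty := by
  rw [equiv_eq_smul_empty, one_smul]

theorem equiv_mul (x y : CoprodI G) : Word.equiv (x * y) = x • Word.equiv y := by
  rw [equiv_eq_smul_empty, equiv_eq_smul_empty, mul_smul]

theorem prod_equiv (x : CoprodI G) : (Word.equiv x).prod = x :=
  (Word.equiv).symm_apply_apply x

theorem equiv_prod (w : Word G) : Word.equiv w.prod = w :=
  (Word.equiv).apply_symm_apply w

theorem equiv_ne_empty {x : CoprodI G} (hx : x ≠ 1) : Word.equiv x ≠ Word.empty := by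
  intro h
  exact hx ((Word.equiv).injective (h.trans equiv_one.symm))

def hd (x : CoprodI G) : Option ι := (Word.equiv x).fstIdx

def len (x : CoprodI G) : ℕ := (Word.equiv x).toList.length

theorem hd_one : hd (1 : CoprodI G) = none := by simp [hd, equiv_one, fstIdx, Word.empty]

theorem exists_hd {x : CoprodI G} (hx : x ≠ 1) : ∃ i, hd x = some i := by
  have h := equiv_ne_empty hx
  rcases hl : (Word.equiv x).toList with _ | ⟨a, l⟩
  · exact absurd (Word.ext (by simp [hl, Word.empty])) h
  · exact ⟨a.1, by simp [hd, fstIdx, hl]⟩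

def wordInv (w : Word G) : Word G where
  toList := (w.toList.map fun l => (⟨l.1, l.2⁻¹⟩ : Σ i, G i)).reverse
  ne_one := by
    intro l hl
    simp only [List.mem_reverse, List.mem_map] at hl
    obtain ⟨l', hl', rfl⟩ := hl
    simpa using w.ne_one l' hl'
  chain_ne := by
    rw [List.isChain_reverse]
    exact List.isChain_map_of_isChain _ (fun a b h => h.symm) w.chain_ne

theorem wordInv_toList (w : Word G) :
    (wordInv w).toList = (w.toList.map fun l => (⟨l.1, l.2⁻¹⟩ : Σ i, G i)).reverse := rfl

theorem prod_wordInv (w : Word G) : (wordInv w).prod = w.prod⁻¹ := by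
  rw [Word.prod, Word.prod, wordInv_toList, List.prod_inv_reverse]
  simp only [← List.map_reverse, List.map_map]
  congr 1

theorem equiv_inv (x : CoprodI G) : Word.equiv x⁻¹ = wordInv (Word.equiv x) := by
  have : (wordInv (Word.equiv x)).prod = x⁻¹ := by rw [prod_wordInv, prod_equiv]
  rw [← this, equiv_prod]

theorem len_inv (x : CoprodI G) : len x⁻¹ = len x := by
  simp [len, equiv_inv, wordInv_toList]

/-- last index of a word -/
def lastIdx (w : Word G) : Option ι := w.toList.getLast?.map Sigma.fst

theorem fstIdx_wordInv (w : Word G) : (wordInv w).fstIdx = lastIdx w := by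
  rw [fstIdx, lastIdx, wordInv_toList, List.head?_reverse, List.getLast?_map]
  cases w.toList.getLast? <;> rfl

theorem hd_inv (x : CoprodI G) : hd x⁻¹ = lastIdx (Word.equiv x) := by
  rw [hd, equiv_inv, fstIdx_wordInv]

theorem hd_eq_lastIdx_inv (x : CoprodI G) : hd x = lastIdx (Word.equiv x⁻¹) := by
  rw [← hd_inv, inv_inv]

-- head decomposition
theorem head_ne_one {w : Word G} {i : ι} (hw : w.fstIdx = some i) :
    (equivPair i w).head ≠ 1 := by
  intro h
  have hr : rcons (equivPair i w) = w := (equivPair i).symm_apply_apply w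
  rw [rcons, dif_pos h] at hr
  exact (equivPair i w).fstIdx_ne (by rw [hr]; exact hw)

theorem cons_decomp {w : Word G} {i : ι} (hw : w.fstIdx = some i) :
    w.toList = ⟨i, (equivPair i w).head⟩ :: (equivPair i w).tail.toList := by
  have hr : rcons (equivPair i w) = w := (equivPair i).symm_apply_apply w
  rw [rcons, dif_neg (head_ne_one hw)] at hr
  conv_lhs => rw [← hr]
  rfl

theorem equivPair_head_eq {w : Word G} {i : ι} {m : G i} {rest : List (Σ i, G i)}
    (hw : w.toList = ⟨i, m⟩ :: rest) :
    (equivPair i w).head = m ∧ (equivPair i w).tail.toList = rest := by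
  have hfst : w.fstIdx = some i := by simp [fstIdx, hw]
  have h := cons_decomp hfst
  rw [hw] at h
  obtain ⟨h1, h2⟩ := List.cons.inj h.symm
  have := (Sigma.mk.inj_iff.mp h1).2
  exact ⟨eq_of_heq this, h2⟩

/-- stripping the head letter -/
theorem equiv_inv_head_mul {x : CoprodI G} {i : ι} (hx : hd x = some i) :
    Word.equiv ((CoprodI.of (equivPair i (Word.equiv x)).head)⁻¹ * x) =
      (equivPair i (Word.equiv x)).tail := by
  rw [equiv_mul]
  exact (equivPair_tail_eq_inv_smul (Word.equiv x)).symm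

theorem decomp_of_hd {x : CoprodI G} {i : ι} (hx : hd x = some i) :
    x = CoprodI.of (equivPair i (Word.equiv x)).head *
        ((equivPair i (Word.equiv x)).tail).prod := by
  have h := equiv_inv_head_mul hx
  have := congrArg Word.prod h
  rw [prod_equiv] at this
  rw [← this]
  group

-- smul computation lemmas
theorem of_smul_cancel {w : Word G} {i : ι} {m : G i}
    (hm : m * (equivPair i w).head = 1) :
    CoprodI.of m • w = (equivPair i w).tail := by
  rw [Word.of_smul_def, rcons, dif_pos hm]

theorem of_smul_prepend {w : Word G} {i : ι} (m : G i) (hm : m ≠ 1)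
    (hw : w.fstIdx ≠ some i) :
    (CoprodI.of m • w).toList = ⟨i, m⟩ :: w.toList := by
  rw [← cons_eq_smul (h1 := hw) (h2 := hm)]
  rfl

theorem fstIdx_of_smul_prepend {w : Word G} {i : ι} (m : G i) (hm : m ≠ 1)
    (hw : w.fstIdx ≠ some i) :
    (CoprodI.of m • w).fstIdx = some i := by
  rw [fstIdx, of_smul_prepend m hm hw]
  rfl

/-- ping-pong for NeWords acting on words -/
theorem neWord_smul_fstIdx {i j : ι} (W : NeWord G i j) :
    ∀ w : Word G, w.fstIdx ≠ some j → (W.prod • w).fstIdx = some i := by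
  induction W with
  | singleton x hx =>
    intro w hw
    rw [NeWord.prod_singleton]
    exact fstIdx_of_smul_prepend x hx hw
  | append W1 hne W2 ih1 ih2 =>
    intro w hw
    rw [NeWord.append_prod, mul_smul]
    refine ih1 _ ?_
    rw [ih2 w hw]
    simpa using Ne.symm hne

theorem hd_neWord_prod {i j : ι} (W : NeWord G i j) : hd W.prod = some i := by
  have h := neWord_smul_fstIdx W Word.empty (by simp [fstIdx, Word.empty])
  rw [hd, equiv_eq_smul_empty]
  exact h

theorem neWord_prod_ne_one {i j : ι} (W : NeWord G i j) : W.prod ≠ 1 := by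
  intro h
  have := hd_neWord_prod W
  rw [h, hd_one] at this
  exact nomatch this

theorem hd_inv_neWord_prod {i j : ι} (W : NeWord G i j) : hd W.prod⁻¹ = some j := by
  rw [← NeWord.inv_prod]
  exact hd_neWord_prod W.inv

theorem exists_neWord {x : CoprodI G} (hx : x ≠ 1) :
    ∃ (i j : ι) (W : NeWord G i j), W.prod = x ∧ hd x = some i ∧ hd x⁻¹ = some j := by
  obtain ⟨i, j, W, hW⟩ := NeWord.of_word (Word.equiv x) (equiv_ne_empty hx)
  have hprod : W.prod = x := by rw [NeWord.prod, hW, prod_equiv]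
  exact ⟨i, j, W, hprod, by rw [← hprod]; exact hd_neWord_prod W,
    by rw [← hprod]; exact hd_inv_neWord_prod W⟩

-- helper algebra lemmas
theorem conj_pow_eq {α : Type*} [Group α] (c d : α) (n : ℕ) :
    (c * d * c⁻¹) ^ n = c * d ^ n * c⁻¹ := by
  induction n with
  | zero => simp
  | succ n ih => rw [pow_succ, pow_succ, ih]; group

theorem mul_mul_pow_eq {α : Type*} [Group α] (u v : α) (k : ℕ) :
    (u * v) ^ (k + 1) = u * (v * u) ^ k * v := by
  induction k with
  | zero => simp
  | succ k ih => rw [pow_succ, ih, pow_succ]; group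

theorem lastIdx_wordInv (w : Word G) : lastIdx (wordInv w) = w.fstIdx := by
  rw [lastIdx, wordInv_toList, List.getLast?_reverse, List.head?_map, fstIdx]
  cases w.toList.head? <;> rfl

theorem word_eq_empty_of_toList {w : Word G} (h : w.toList = []) : w = Word.empty := by
  apply Word.ext
  simp [h, Word.empty]

theorem ne_one_of_equiv_toList {x : CoprodI G} {a : Σ i, G i} {rest : List (Σ i, G i)}
    (h : (Word.equiv x).toList = a :: rest) : x ≠ 1 := by
  intro hx
  rw [hx, equiv_one] at h
  simp [Word.empty] at h

/-- The key lemma: all positive powers of a nontrivial element have nonempty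
normal form with the same first and last indices as the element itself. -/
theorem pow_neWord (htf : ∀ (i : ι) (m : G i), m ≠ 1 → ∀ n : ℕ, 0 < n → m ^ n ≠ 1) :
    ∀ (N : ℕ) (x : CoprodI G), len x ≤ N → x ≠ 1 →
    ∃ i j, hd x = some i ∧ hd x⁻¹ = some j ∧
      ∀ n : ℕ, 0 < n → ∃ W : NeWord G i j, W.prod = x ^ n := by
  intro N
  induction N with
  | zero =>
    intro x hlen hx
    exact absurd ((Word.equiv).injective ((word_eq_empty_of_toList
      (List.length_eq_zero_iff.mp (Nat.le_zero.mp hlen))).trans equiv_one.symm)) hx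
  | succ N ih =>
    intro x hlen hx
    obtain ⟨i, j, W1, hW1, hdx, hdxi⟩ := exists_neWord hx
    by_cases hij : i = j
    swap
    · -- first and last indices differ: concatenate copies
      refine ⟨i, j, hdx, hdxi, fun n hn => ?_⟩
      clear hlen
      induction n with
      | zero => omega
      | succ n ihn =>
        rcases Nat.eq_zero_or_pos n with h0 | hpos
        · subst h0; exact ⟨W1, by simpa using hW1⟩
        · obtain ⟨W, hW⟩ := ihn hpos
          exact ⟨W.append (fun hji => hij hji.symm) W1,
            by rw [NeWord.append_prod, hW, hW1, pow_succ]⟩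
    · subst hij
      -- first and last indices agree
      have hfst : (Word.equiv x).fstIdx = some i := hdx
      set h := (equivPair i (Word.equiv x)).head with hh
      set t := (equivPair i (Word.equiv x)).tail with ht
      have hh1 : h ≠ 1 := head_ne_one hfst
      have hxd : x = CoprodI.of h * t.prod := decomp_of_hd hdx
      have hxlist : (Word.equiv x).toList = ⟨i, h⟩ :: t.toList := cons_decomp hfst
      rcases htl : t.toList with _ | ⟨a0, t0⟩
      · -- single-letter case
        have ht1 : t.prod = 1 := by rw [word_eq_empty_of_toList htl]; exact Word.prod_empty
        have hx_of : x = CoprodI.of h := by rw [hxd, ht1, mul_one]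
        exact ⟨i, i, hdx, hdxi, fun n hn => ⟨NeWord.singleton (h ^ n) (htf i h hh1 n hn),
          by rw [NeWord.prod_singleton, map_pow, hx_of]⟩⟩
      · -- at least three syllables
        have htl' : t.toList ≠ [] := by rw [htl]; simp
        -- the last letter of x
        have hfst' : (Word.equiv x⁻¹).fstIdx = some i := hdxi
        set h' := (equivPair i (Word.equiv x⁻¹)).head with hh'
        set s := (equivPair i (Word.equiv x⁻¹)).tail with hs
        have hh'1 : h' ≠ 1 := head_ne_one hfst'
        set l := h'⁻¹ with hl
        have hl1 : l ≠ 1 := inv_ne_one.mpr hh'1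
        have hxilist : (Word.equiv x⁻¹).toList = ⟨i, h'⟩ :: s.toList := cons_decomp hfst'
        -- identify the last letter of x (and of t)
        have hwinv : Word.equiv x = wordInv (Word.equiv x⁻¹) := by
          have := equiv_inv x⁻¹
          rwa [inv_inv] at this
        have hwlist2 : (Word.equiv x).toList =
            (s.toList.map fun p => (⟨p.1, p.2⁻¹⟩ : Σ i, G i)).reverse ++ [⟨i, l⟩] := by
          rw [hwinv, wordInv_toList, hxilist]
          simp [hl]
        have hxlast : (Word.equiv x).toList.getLast? = some ⟨i, l⟩ := by
          rw [hwlist2]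
          simp
        have htlast : t.toList.getLast? = some ⟨i, l⟩ := by
          rw [hxlist, htl, List.getLast?_cons_cons] at hxlast
          rw [htl]
          exact hxlast
        -- the structure of (wordInv t)
        have htinvhead : (wordInv t).toList.head? = some ⟨i, l⁻¹⟩ := by
          rw [wordInv_toList, List.head?_reverse, List.getLast?_map, htlast]
          rfl
        obtain ⟨rest, htinvlist⟩ : ∃ rest, (wordInv t).toList = ⟨i, l⁻¹⟩ :: rest := by
          rcases hc : (wordInv t).toList with _ | ⟨c, cs⟩
          · rw [hc] at htinvhead; simp at htinvhead
          · rw [hc] at htinvhead; simp at htinvhead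
            exact ⟨cs, by rw [htinvhead]⟩
        have hrest : rest ≠ [] := by
          intro hrnil
          rw [hrnil] at htinvlist
          -- then t is a single letter of index i, contradicting fstIdx t ≠ some i
          have hlens : t.toList.length = 1 := by
            have := congrArg List.length htinvlist
            simpa [wordInv_toList] using this
          rcases ht1 : t.toList with _ | ⟨c, cs⟩
          · rw [ht1] at hlens; simp at hlens
          · rw [ht1] at hlens
            simp at hlens
            subst hlens
            rw [ht1] at htlast
            simp at htlast
            have hfi : t.fstIdx = some i := by
              rw [fstIdx, ht1, htlast]
              rfl
            exact (equivPair i (Word.equiv x)).fstIdx_ne hfi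
        -- equivPair of wordInv t
        obtain ⟨hWIhead, hWItail⟩ := equivPair_head_eq (w := wordInv t) htinvlist
        -- the middle element z
        obtain ⟨z, hz⟩ : ∃ z, z = t.prod * CoprodI.of l⁻¹ := ⟨_, rfl⟩
        have hxz : x = CoprodI.of h * z * CoprodI.of l := by
          rw [hz, hxd]
          simp [mul_assoc, ← map_mul]
        have hzinv : z⁻¹ = CoprodI.of l * t.prod⁻¹ := by
          rw [hz]
          simp [mul_inv_rev, ← map_inv]
        have hzinvword : Word.equiv z⁻¹ = (equivPair i (wordInv t)).tail := by
          rw [hzinv, equiv_mul]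
          have : Word.equiv t.prod⁻¹ = wordInv t := by rw [equiv_inv, equiv_prod]
          rw [this]
          exact of_smul_cancel (by rw [hWIhead]; simp)
        have hzinvlist : (Word.equiv z⁻¹).toList = rest := by rw [hzinvword, hWItail]
        have hzne : z ≠ 1 := by
          intro h0
          rw [h0] at hzinvlist
          rw [inv_one, equiv_one] at hzinvlist
          exact hrest (by simpa [Word.empty] using hzinvlist.symm)
        -- indices of z
        have hdzinv : ∃ b, hd z⁻¹ = some b ∧ b ≠ i := by
          obtain ⟨b, hb⟩ := exists_hd (inv_ne_one.mpr hzne)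
          refine ⟨b, hb, ?_⟩
          intro hbi
          subst hbi
          have : (Word.equiv z⁻¹).fstIdx = some b := hb
          rw [hzinvword] at this
          exact (equivPair b (wordInv t)).fstIdx_ne this
        have hdz : ∃ a, hd z = some a ∧ a ≠ i := by
          obtain ⟨a, ha⟩ := exists_hd hzne
          refine ⟨a, ha, ?_⟩
          rw [hd_eq_lastIdx_inv, hzinvword] at ha
          have hrest_last : lastIdx (equivPair i (wordInv t)).tail = lastIdx (wordInv t) := by
            rw [lastIdx, lastIdx, hWItail, htinvlist]
            cases hr2 : rest with
            | nil => exact absurd hr2 hrest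
            | cons r rs => rw [List.getLast?_cons_cons]
          rw [hrest_last, lastIdx_wordInv] at ha
          intro hai
          subst hai
          exact (equivPair a (Word.equiv x)).fstIdx_ne (ht ▸ ha)
        obtain ⟨b, hdzb, hbi⟩ := hdzinv
        obtain ⟨a, hdza, hai⟩ := hdz
        -- length of z
        have hlenz : len z ≤ N := by
          have h1 : len z = len z⁻¹ := (len_inv z).symm
          have h2 : len z⁻¹ = rest.length := by rw [len, hzinvlist]
          have h3 : (Word.equiv x).toList.length ≤ N + 1 := hlen
          have h4 : t.toList.length = rest.length + 1 := by
            have := congrArg List.length htinvlist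
            simpa [wordInv_toList] using this
          rw [hxlist] at h3
          simp [h4] at h3
          omega
        by_cases hlh : l * h = 1
        · -- cancellation case: x = (of h) z (of h)⁻¹, recurse
          obtain ⟨a', b', hdza', hdzb', hpow⟩ := ih z hlenz hzne
          rw [hdza] at hdza'
          rw [hdzb] at hdzb'
          obtain rfl : a = a' := by injection hdza'
          obtain rfl : b = b' := by injection hdzb'
          have hlh' : CoprodI.of l = (CoprodI.of h)⁻¹ := by
            rw [← map_inv]
            congr 1
            rw [← one_mul h⁻¹, ← hlh, mul_assoc, mul_inv_cancel, mul_one]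
          refine ⟨i, i, hdx, hdxi, fun n hn => ?_⟩
          obtain ⟨W, hW⟩ := hpow n hn
          refine ⟨((NeWord.singleton h hh1).append (Ne.symm hai) W).append hbi
            (NeWord.singleton h⁻¹ (inv_ne_one.mpr hh1)), ?_⟩
          rw [NeWord.append_prod, NeWord.append_prod, NeWord.prod_singleton,
            NeWord.prod_singleton, hW, map_inv]
          rw [hxz, hlh', conj_pow_eq]
        · -- merge case: explicit construction
          obtain ⟨a', b', M, hM, hdza', hdzb'⟩ := exists_neWord hzne
          rw [hdza] at hdza'
          rw [hdzb] at hdzb'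
          obtain rfl : a = a' := by injection hdza'
          obtain rfl : b = b' := by injection hdzb'
          refine ⟨i, i, hdx, hdxi, fun n hn => ?_⟩
          -- powers of (z * of (l * h)) as NeWords from a to i
          have hQ : ∀ m : ℕ, ∃ Q : NeWord G a i,
              Q.prod = (z * CoprodI.of (l * h)) ^ (m + 1) := by
            intro m
            induction m with
            | zero =>
              exact ⟨M.append hbi (NeWord.singleton (l * h) hlh),
                by rw [NeWord.append_prod, NeWord.prod_singleton, hM, pow_one]⟩
            | succ m ihm =>
              obtain ⟨Q, hQ⟩ := ihm
              exact ⟨Q.append (Ne.symm hai) (M.append hbi (NeWord.singleton (l * h) hlh)),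
                by rw [NeWord.append_prod, NeWord.append_prod, NeWord.prod_singleton, hQ, hM,
                  ← pow_succ]⟩
          rcases n with _ | _ | m
          · omega
          · -- n = 1
            refine ⟨(NeWord.singleton h hh1).append (Ne.symm hai)
              (M.append hbi (NeWord.singleton l hl1)), ?_⟩
            rw [NeWord.append_prod, NeWord.append_prod, NeWord.prod_singleton,
              NeWord.prod_singleton, hM, pow_one, hxz, mul_assoc]
          · -- n = m + 2
            obtain ⟨Q, hQ⟩ := hQ m
            have hb : z * CoprodI.of (l * h) = z * CoprodI.of l * CoprodI.of h := by
              rw [map_mul, mul_assoc]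
            refine ⟨(NeWord.singleton h hh1).append (Ne.symm hai)
              ((Q.append (Ne.symm hai) M).append hbi (NeWord.singleton l hl1)), ?_⟩
            rw [NeWord.append_prod, NeWord.append_prod, NeWord.append_prod,
              NeWord.prod_singleton, NeWord.prod_singleton, hQ, hM, hb,
              hxz, mul_assoc (CoprodI.of h) z (CoprodI.of l),
              mul_mul_pow_eq (CoprodI.of h) (z * CoprodI.of l) (m + 1)]
            simp [mul_assoc]

theorem coprodI_pow_ne_one (htf : ∀ (i : ι) (m : G i), m ≠ 1 → ∀ n : ℕ, 0 < n → m ^ n ≠ 1)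
    {x : CoprodI G} (hx : x ≠ 1) {n : ℕ} (hn : 0 < n) : x ^ n ≠ 1 := by
  obtain ⟨i, j, _, _, hp⟩ := pow_neWord htf (len x) x le_rfl hx
  obtain ⟨W, hW⟩ := hp n hn
  rw [← hW]
  exact neWord_prod_ne_one W

theorem freeGroupUnit_pow_ne_one {m : FreeGroup Unit} (hm : m ≠ 1) {n : ℕ} (hn : 0 < n) :
    m ^ n ≠ 1 := by
  obtain ⟨k, hk⟩ : ∃ k : ℤ, m = FreeGroup.of () ^ k :=
    ⟨FreeGroup.freeGroupUnitEquivInt m, (FreeGroup.freeGroupUnitEquivInt.left_inv m).symm⟩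
  have hof : ∀ j : ℤ, FreeGroup.of () ^ j = 1 → j = 0 := by
    intro j hj
    have := congrArg (FreeGroup.lift fun _ : Unit => Multiplicative.ofAdd (1 : ℤ)) hj
    simp only [map_zpow, FreeGroup.lift_apply_of, map_one] at this
    simpa using congrArg Multiplicative.toAdd this
  intro h1
  have hkn : (k * n : ℤ) = 0 := by
    apply hof
    rw [zpow_mul, zpow_natCast, ← hk]
    exact h1
  have : k = 0 := by
    rcases mul_eq_zero.mp hkn with h | h
    · exact h
    · exfalso
      have hn0 : n = 0 := by exact_mod_cast h
      omega
  exact hm (by rw [hk, this, zpow_zero])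

theorem freeGroup_pow_ne_one {σ : Type*} [DecidableEq σ] {m : FreeGroup σ} (hm : m ≠ 1)
    {n : ℕ} (hn : 0 < n) : m ^ n ≠ 1 := by
  intro h
  refine coprodI_pow_ne_one (G := fun _ : σ => FreeGroup Unit)
    (fun _ m' hm' n' hn' => freeGroupUnit_pow_ne_one hm' hn')
    (x := freeGroupEquivCoprodI m) ?_ hn ?_
  · intro h1
    exact hm (freeGroupEquivCoprodI.injective (h1.trans (map_one freeGroupEquivCoprodI).symm))
  · rw [← map_pow, h, map_one]

/-- Reduction: any element not in the image of `G i₀` can be multiplied on the left and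
right by elements of `G i₀` so that both first and last indices avoid `i₀`. -/
theorem reduce_coset (i₀ : ι) :
    ∀ (N : ℕ) (x : CoprodI G), len x ≤ N → x ∉ (CoprodI.of : G i₀ →* CoprodI G).range →
    ∃ (a b : G i₀) (c d : ι), c ≠ i₀ ∧ d ≠ i₀ ∧
      hd (CoprodI.of a * x * CoprodI.of b) = some c ∧
      hd (CoprodI.of a * x * CoprodI.of b)⁻¹ = some d := by
  intro N
  induction N with
  | zero =>
    intro x hlen hx
    exfalso
    apply hx
    have hx1 : x = 1 := (Word.equiv).injective ((word_eq_empty_of_toList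
      (List.length_eq_zero_iff.mp (Nat.le_zero.mp hlen))).trans equiv_one.symm)
    exact ⟨1, by rw [map_one, hx1]⟩
  | succ N ih =>
    intro x hlen hx
    have hx1 : x ≠ 1 := fun h => hx ⟨1, by rw [map_one, h]⟩
    obtain ⟨c, hc⟩ := exists_hd hx1
    by_cases hci : c = i₀
    · -- strip the leftmost letter (it has index i₀)
      subst hci
      have hh0 : (equivPair c (Word.equiv x)).head ≠ 1 := head_ne_one hc
      have hstrip := equiv_inv_head_mul (i := c) hc
      have hlist := cons_decomp (i := c) hc
      have hlen' : len ((CoprodI.of (equivPair c (Word.equiv x)).head)⁻¹ * x) ≤ N := by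
        rw [len, hstrip]
        have h2 := congrArg List.length hlist
        rw [len] at hlen
        simp only [List.length_cons] at h2
        omega
      have hx' : ((CoprodI.of (equivPair c (Word.equiv x)).head)⁻¹ * x) ∉
          (CoprodI.of : G c →* CoprodI G).range := by
        rintro ⟨a, ha⟩
        refine hx ⟨(equivPair c (Word.equiv x)).head * a, ?_⟩
        rw [map_mul, ha]
        group
      obtain ⟨a, b, c', d', hc', hd', hhd1, hhd2⟩ := ih _ hlen' hx'
      have hrw : CoprodI.of (a * (equivPair c (Word.equiv x)).head⁻¹) * x * CoprodI.of b =
          CoprodI.of a * ((CoprodI.of (equivPair c (Word.equiv x)).head)⁻¹ * x) * CoprodI.of b := by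
        rw [map_mul, map_inv]
        group
      exact ⟨a * (equivPair c (Word.equiv x)).head⁻¹, b, c', d', hc', hd',
        by rw [hrw]; exact hhd1, by rw [hrw]; exact hhd2⟩
    · obtain ⟨d, hd2⟩ := exists_hd (inv_ne_one.mpr hx1)
      by_cases hdi : d = i₀
      · -- strip the rightmost letter (it has index i₀)
        subst hdi
        have hh1 : (equivPair d (Word.equiv x⁻¹)).head ≠ 1 := head_ne_one hd2
        have hstrip := equiv_inv_head_mul (i := d) hd2
        have hlist := cons_decomp (i := d) hd2
        have e1 : (x * CoprodI.of (equivPair d (Word.equiv x⁻¹)).head)⁻¹ =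
            (CoprodI.of (equivPair d (Word.equiv x⁻¹)).head)⁻¹ * x⁻¹ := by
          rw [mul_inv_rev]
        have hlen' : len (x * CoprodI.of (equivPair d (Word.equiv x⁻¹)).head) ≤ N := by
          rw [← len_inv, e1, len, hstrip]
          have h3 := congrArg List.length hlist
          rw [← len_inv x, len] at hlen
          simp only [List.length_cons] at h3
          omega
        have hx' : (x * CoprodI.of (equivPair d (Word.equiv x⁻¹)).head) ∉
            (CoprodI.of : G d →* CoprodI G).range := by
          rintro ⟨a, ha⟩
          refine hx ⟨a * (equivPair d (Word.equiv x⁻¹)).head⁻¹, ?_⟩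
          rw [map_mul, map_inv, ha]
          group
        obtain ⟨a, b, c', d', hc', hd', hhd1, hhd2⟩ := ih _ hlen' hx'
        have hrw : CoprodI.of a * x * CoprodI.of ((equivPair d (Word.equiv x⁻¹)).head * b) =
            CoprodI.of a * (x * CoprodI.of (equivPair d (Word.equiv x⁻¹)).head) * CoprodI.of b := by
          rw [map_mul]
          group
        exact ⟨a, (equivPair d (Word.equiv x⁻¹)).head * b, c', d', hc', hd',
          by rw [hrw]; exact hhd1, by rw [hrw]; exact hhd2⟩
      · exact ⟨1, 1, c, d, hci, hdi, by simpa using hc, by simpa using hd2⟩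



/-- The two-factor family: `true ↦ FreeGroup (Fin r)`, `false ↦ FreeGroup Unit`. -/
abbrev K (r : ℕ) : Bool → Type
  | true => FreeGroup (Fin r)
  | false => FreeGroup Unit

instance (r : ℕ) : (b : Bool) → Group (K r b)
  | true => inferInstanceAs (Group (FreeGroup (Fin r)))
  | false => inferInstanceAs (Group (FreeGroup Unit))

instance (r : ℕ) : (b : Bool) → DecidableEq (K r b)
  | true => inferInstanceAs (DecidableEq (FreeGroup (Fin r)))
  | false => inferInstanceAs (DecidableEq (FreeGroup Unit))

def toCI (r : ℕ) : (FreeGroup (Fin r)) ∗ (FreeGroup Unit) →* CoprodI (K r) :=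
  Coprod.lift (CoprodI.of (M := K r) (i := true)) (CoprodI.of (M := K r) (i := false))

def fromCI (r : ℕ) : CoprodI (K r) →* (FreeGroup (Fin r)) ∗ (FreeGroup Unit) :=
  CoprodI.lift (fun b => match b with
    | true => (Coprod.inl : FreeGroup (Fin r) →* _)
    | false => (Coprod.inr : FreeGroup Unit →* _))

/-- The equivalence between the binary coproduct and the `Bool`-indexed coproduct. -/
def eCI (r : ℕ) : ((FreeGroup (Fin r)) ∗ (FreeGroup Unit)) ≃* CoprodI (K r) :=
  MonoidHom.toMulEquiv (toCI r) (fromCI r)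
    (by
      apply Coprod.hom_ext
      · ext a
        simp [toCI, fromCI]
      · ext a
        simp [toCI, fromCI])
    (by
      apply CoprodI.ext_hom
      intro i
      cases i
      · ext a
        simp [toCI, fromCI]
      · ext a
        simp [toCI, fromCI])

theorem eCI_inl (r : ℕ) (a : FreeGroup (Fin r)) :
    eCI r (Coprod.inl a) = CoprodI.of (M := K r) (i := true) a := by
  simp [eCI, toCI, MonoidHom.toMulEquiv]

theorem eCI_inr (r : ℕ) (a : FreeGroup Unit) :
    eCI r (Coprod.inr a) = CoprodI.of (M := K r) (i := false) a := by
  simp [eCI, toCI, MonoidHom.toMulEquiv]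


/-- substitution family: identity on the first factor, `z ↦ x` on the second -/
def fB (r : ℕ) (x : CoprodI (K r)) : ∀ b, K r b →* CoprodI (K r)
  | true => CoprodI.of
  | false => FreeGroup.lift (fun _ : Unit => x)

theorem fB_false_gen (r : ℕ) (w : CoprodI (K r)) (u : Unit) :
    fB r w false (FreeGroup.of u) = w := by
  show FreeGroup.lift (fun _ : Unit => w) (FreeGroup.of u) = w
  simp

theorem fB_true_apply (r : ℕ) (w : CoprodI (K r)) (m : K r true) :
    fB r w true m = CoprodI.of m := rfl

theorem fB_comp (r : ℕ) (x y : CoprodI (K r)) :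
    (CoprodI.lift (fB r x)).comp (CoprodI.lift (fB r y)) =
      CoprodI.lift (fB r ((CoprodI.lift (fB r x)) y)) := by
  apply CoprodI.ext_hom
  intro i
  cases i
  · ext u
    simp only [MonoidHom.comp_apply, CoprodI.lift_of]
    rw [fB_false_gen r y u, fB_false_gen]
  · ext u
    simp only [MonoidHom.comp_apply, CoprodI.lift_of]
    rfl

theorem fB_id (r : ℕ) :
    CoprodI.lift (fB r (CoprodI.of (M := K r) (i := false) (FreeGroup.of ()))) =
      MonoidHom.id _ := by
  apply CoprodI.ext_hom
  intro i
  cases i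
  · ext u
    simp only [MonoidHom.comp_apply, CoprodI.lift_of, MonoidHom.id_apply]
    exact fB_false_gen r _ u
  · ext u
    simp only [MonoidHom.comp_apply, CoprodI.lift_of, MonoidHom.id_apply]
    rfl

end FFX

open FFX in
/-- Claim II: if `A` is a free group of finite rank, `G = A ∗ F(z)`, and `g ∈ G` does not lie
in the subgroup `A`, then `A` together with `g` generate their free product inside `G`: the
substitution homomorphism `A ∗ F(z) → G`, identical on `A` and sending `z ↦ g`, is
injective. -/
theorem free_factor_with_extra_element (r : ℕ)
    (g : FreeGroup (Fin r) ∗ FreeGroup Unit)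
    (hg : g ∉ (Coprod.inl :
      FreeGroup (Fin r) →* FreeGroup (Fin r) ∗ FreeGroup Unit).range) :
    Function.Injective
      (Coprod.lift
        (Coprod.inl : FreeGroup (Fin r) →* FreeGroup (Fin r) ∗ FreeGroup Unit)
        (FreeGroup.lift (fun _ : Unit => g))) := by
  classical
  set φ := Coprod.lift
        (Coprod.inl : FreeGroup (Fin r) →* FreeGroup (Fin r) ∗ FreeGroup Unit)
        (FreeGroup.lift (fun _ : Unit => g)) with hφ
  set E := eCI r with hEdef
  set x : CoprodI (K r) := E g with hxdef
  -- torsion-freeness of the factors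
  have htf : ∀ (b : Bool) (m : K r b), m ≠ 1 → ∀ n : ℕ, 0 < n → m ^ n ≠ 1 := by
    intro b
    cases b
    · exact fun m hm n hn => freeGroup_pow_ne_one hm hn
    · exact fun m hm n hn => freeGroup_pow_ne_one hm hn
  -- the conjugated homomorphism is a `CoprodI.lift`
  have hlift : (E.toMonoidHom.comp (φ.comp E.symm.toMonoidHom)) = CoprodI.lift (fB r x) := by
    apply CoprodI.ext_hom
    intro i
    have hsymm_true : ∀ v : K r true, E.symm (CoprodI.of (M := K r) (i := true) v) =
        Coprod.inl v := fun v => by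
      rw [← eCI_inl r v, ← hEdef, MulEquiv.symm_apply_apply]
    have hsymm_false : ∀ v : K r false, E.symm (CoprodI.of (M := K r) (i := false) v) =
        Coprod.inr v := fun v => by
      rw [← eCI_inr r v, ← hEdef, MulEquiv.symm_apply_apply]
    cases i
    · ext u
      simp only [MonoidHom.coe_comp, Function.comp_apply, MonoidHom.comp_apply,
        CoprodI.lift_of, MulEquiv.coe_toMonoidHom]
      rw [hsymm_false, fB_false_gen r x u, hφ, Coprod.lift_apply_inr, FreeGroup.lift_apply_of]
    · ext v
      simp only [MonoidHom.coe_comp, Function.comp_apply, MonoidHom.comp_apply,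
        CoprodI.lift_of, MulEquiv.coe_toMonoidHom]
      rw [hsymm_true, hφ, Coprod.lift_apply_inl, hEdef, eCI_inl]
      exact (fB_true_apply r x (FreeGroup.of v)).symm
  -- x is not in the range of the inclusion of the first factor
  have hgx : x ∉ (CoprodI.of : K r true →* CoprodI (K r)).range := by
    rintro ⟨a, ha⟩
    refine hg ⟨a, ?_⟩
    apply E.injective
    rw [show E (Coprod.inl a) = CoprodI.of (M := K r) (i := true) a from by
      rw [hEdef]; exact eCI_inl r a, ha]
  -- reduce x within its double coset
  obtain ⟨a, b, c, d, hc, hd, hdx', hdx'inv⟩ :=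
    reduce_coset (G := K r) true (len x) x le_rfl hgx
  have hcf : c = false := by cases c <;> simp_all
  have hdf : d = false := by cases d <;> simp_all
  subst hcf hdf
  set x' : CoprodI (K r) := CoprodI.of a * x * CoprodI.of b with hx'def
  have hx'ne : x' ≠ 1 := by
    intro h
    rw [h, hd_one] at hdx'
    exact nomatch hdx'
  -- the power package for x'
  obtain ⟨i', j', hdi', hdj', hpow⟩ := pow_neWord htf (len x') x' le_rfl hx'ne
  obtain rfl : i' = false := by rw [hdx'] at hdi'; exact (Option.some.inj hdi').symm
  obtain rfl : j' = false := by rw [hdx'inv] at hdj'; exact (Option.some.inj hdj').symm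
  -- ping-pong: the lift determined by x' is injective
  have hping : Function.Injective (CoprodI.lift (fB r x')) := by
    refine CoprodI.lift_injective_of_ping_pong (fB r x')
      (Or.inr ⟨false, ?_⟩)
      (fun bo : Bool => Bool.rec {w : Word (K r) | w.fstIdx = some false}
        {w : Word (K r) | w.fstIdx ≠ some false} bo) ?_ ?_ ?_
    · show (3 : Cardinal) ≤ Cardinal.mk (FreeGroup Unit)
      rw [FreeGroup.freeGroupUnitEquivInt.cardinal_eq, Cardinal.mk_denumerable]
      exact le_of_lt (by exact_mod_cast Cardinal.nat_lt_aleph0 3)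
    · intro i
      cases i
      · have hne1 : (FreeGroup.of () : FreeGroup Unit) ≠ 1 := by
          intro h
          have := congrArg (FreeGroup.lift fun _ : Unit => Multiplicative.ofAdd (1 : ℤ)) h
          simpa using this
        refine ⟨CoprodI.of (M := K r) (i := false) (FreeGroup.of ()) • Word.empty, ?_⟩
        show Word.fstIdx _ = some false
        exact fstIdx_of_smul_prepend (G := K r) (i := false) (FreeGroup.of ()) hne1
          (by simp [Word.fstIdx, Word.empty])
      · exact ⟨Word.empty, by simp [Word.fstIdx, Word.empty]⟩
    · intro i j hij
      cases i <;> cases j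
      · exact absurd rfl hij
      · -- false true
        rw [Function.onFun, Set.disjoint_left]
        intro w hw1 hw2
        exact (hw2 : Word.fstIdx w ≠ some false) (hw1 : Word.fstIdx w = some false)
      · -- true false
        rw [Function.onFun, Set.disjoint_left]
        intro w hw1 hw2
        exact (hw1 : Word.fstIdx w ≠ some false) (hw2 : Word.fstIdx w = some false)
      · exact absurd rfl hij
    · intro i j hij
      cases i <;> cases j
      · exact absurd rfl hij
      · -- i = false, j = true : powers of x' send X true into X false
        intro h hne1
        intro w hw
        rw [Set.mem_smul_set] at hw
        obtain ⟨w0, hw0, rfl⟩ := hw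
        have hw0' : Word.fstIdx w0 ≠ some false := hw0
        show Word.fstIdx _ = some false
        obtain ⟨k, hk⟩ : ∃ k : ℤ, h = FreeGroup.of () ^ k :=
          ⟨FreeGroup.freeGroupUnitEquivInt h, (FreeGroup.freeGroupUnitEquivInt.left_inv h).symm⟩
        have hk0 : k ≠ 0 := by
          rintro rfl
          exact hne1 (by rw [hk, zpow_zero])
        have happ : fB r x' false h = x' ^ k := by
          rw [hk, map_zpow, fB, FreeGroup.lift_apply_of]
        rw [happ]
        rcases lt_or_gt_of_ne hk0 with hneg | hpos
        · obtain ⟨W, hW⟩ := hpow (-k).toNat (by omega)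
          have hxk : x' ^ k = W.inv.prod := by
            rw [NeWord.inv_prod, hW, ← zpow_natCast, ← zpow_neg]
            congr 1
            omega
          rw [hxk]
          exact neWord_smul_fstIdx W.inv w0 hw0'
        · obtain ⟨W, hW⟩ := hpow k.toNat (by omega)
          have hxk : x' ^ k = W.prod := by
            rw [hW, ← zpow_natCast]
            congr 1
            omega
          rw [hxk]
          exact neWord_smul_fstIdx W w0 hw0'
      · -- i = true, j = false : elements of A prepend a true letter
        intro h hne1
        intro w hw
        rw [Set.mem_smul_set] at hw
        obtain ⟨w0, hw0, rfl⟩ := hw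
        have hw0' : Word.fstIdx w0 = some false := hw0
        show Word.fstIdx _ ≠ some false
        have happ : fB r x' true h = CoprodI.of h := rfl
        rw [happ, fstIdx_of_smul_prepend (G := K r) (i := true) h hne1 (by rw [hw0']; simp)]
        simp
      · exact absurd rfl hij
  -- transfer injectivity back through the automorphism θ
  set Θ : CoprodI (K r) →* CoprodI (K r) :=
    CoprodI.lift (fB r (CoprodI.of a * CoprodI.of (M := K r) (i := false) (FreeGroup.of ())
      * CoprodI.of b)) with hΘdef
  set Θ' : CoprodI (K r) →* CoprodI (K r) :=
    CoprodI.lift (fB r (CoprodI.of a⁻¹ * CoprodI.of (M := K r) (i := false) (FreeGroup.of ())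
      * CoprodI.of b⁻¹)) with hΘ'def
  have hΘΘ' : Θ.comp Θ' = MonoidHom.id _ := by
    rw [hΘdef, hΘ'def, fB_comp, ← fB_id r]
    congr 1
    simp only [map_mul, CoprodI.lift_of, fB_false_gen, fB_true_apply, fB, FreeGroup.lift_apply_of, map_inv]
    group
  -- lift (fB r x) ∘ Θ = lift (fB r x')
  have hcomp : (CoprodI.lift (fB r x)).comp Θ = CoprodI.lift (fB r x') := by
    rw [hΘdef, fB_comp]
    congr 1
    rw [hx'def]
    simp only [map_mul, CoprodI.lift_of, fB_false_gen, fB_true_apply, fB, FreeGroup.lift_apply_of]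
  have hΘpt : ∀ y, Θ (Θ' y) = y := fun y => DFunLike.congr_fun hΘΘ' y
  have hΘ'inj : Function.Injective Θ' := fun u v huv => by
    have := congrArg Θ huv
    rwa [hΘpt, hΘpt] at this
  have hfBinj : Function.Injective (CoprodI.lift (fB r x)) := by
    have hfun : ⇑(CoprodI.lift (fB r x)) = ⇑(CoprodI.lift (fB r x')) ∘ ⇑Θ' := by
      funext y
      have h1 : CoprodI.lift (fB r x) (Θ (Θ' y)) = CoprodI.lift (fB r x') (Θ' y) :=
        DFunLike.congr_fun hcomp (Θ' y)
      rw [hΘpt] at h1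
      exact h1
    rw [hfun]
    exact hping.comp hΘ'inj
  -- conclude
  have hφfun : ⇑φ = ⇑E.symm ∘ ⇑(CoprodI.lift (fB r x)) ∘ ⇑E := by
    funext u
    have h1 : E (φ (E.symm (E u))) = CoprodI.lift (fB r x) (E u) :=
      DFunLike.congr_fun hlift (E u)
    rw [MulEquiv.symm_apply_apply] at h1
    simp only [Function.comp_apply, ← h1, MulEquiv.symm_apply_apply]
  rw [hφfun]
  exact ((E.symm.injective.comp hfBinj).comp E.injective)
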